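/- Pinsker's inequality: for probability measures P and Q with P absolutely continuous with respect to Q, the total variation distance satisfies ‖P − Q‖_TV ≤ √(KL(P‖Q)/2). -/

import Mathlib

open MeasureTheory

/-- Total variation distance: `‖P − Q‖_TV = sup over measurable A of |P(A) − Q(A)|`. -/
noncomputable def tvDist {Z : Type*} [MeasurableSpace Z] (P Q : Measure Z) : ℝ :=
  ⨆ A : {s : Set Z // MeasurableSet s}, |(P A.1).toReal - (Q A.1).toReal|

/-- KL divergence `KL(P‖Q) = ∫ log(dP/dQ) dP`. -/
noncomputable def klDiv' {Z : Type*} [MeasurableSpace Z] (P Q : Measure Z) : ℝ :=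
  ∫ x, Real.log (P.rnDeriv Q x).toReal ∂P

section PinskerAux

/-- Auxiliary function for Pinsker: `log y - 2(y-1)/(y+1)`. -/
noncomputable def pinskerF (y : ℝ) : ℝ := Real.log y - 2*(y-1)/(y+1)

/-- Auxiliary function for Pinsker: `(2y+4)(y log y - y + 1) - 3(y-1)²`. -/
noncomputable def pinskerG (y : ℝ) : ℝ :=
  (2*y+4)*(y*Real.log y - y + 1) - 3*(y-1)^2

lemma hasDerivAt_pinskerF {x : ℝ} (hx : 0 < x) :
    HasDerivAt pinskerF ((x-1)^2/(x*(x+1)^2)) x := by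
  have h1 : x ≠ 0 := ne_of_gt hx
  have h2 : x + 1 ≠ 0 := by positivity
  have hlog : HasDerivAt Real.log x⁻¹ x := Real.hasDerivAt_log h1
  have hq : HasDerivAt (fun y => 2*(y-1)/(y+1))
      ((2*(x+1) - 2*(x-1))/(x+1)^2) x := by
    have hnum : HasDerivAt (fun y : ℝ => 2*(y-1)) 2 x := by
      simpa using ((hasDerivAt_id x).sub_const 1).const_mul 2
    have hden : HasDerivAt (fun y : ℝ => y+1) 1 x := (hasDerivAt_id x).add_const 1
    have := hnum.div hden h2
    exact this.congr_deriv (by ring)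
  have := hlog.sub hq
  refine this.congr_deriv ?_
  field_simp
  ring

lemma hasDerivAt_pinskerG {x : ℝ} (hx : 0 < x) :
    HasDerivAt pinskerG (4*(x+1)*Real.log x - 8*(x-1)) x := by
  have h1 : x ≠ 0 := ne_of_gt hx
  have hlog : HasDerivAt Real.log x⁻¹ x := Real.hasDerivAt_log h1
  have hxlog : HasDerivAt (fun y => y * Real.log y) (Real.log x + 1) x := by
    have := (hasDerivAt_id x).mul hlog
    refine this.congr_deriv ?_
    field_simp
    simp only [id]; ring
  have hin : HasDerivAt (fun y => y*Real.log y - y + 1) (Real.log x) x := by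
    simpa using (hxlog.sub (hasDerivAt_id x)).add_const 1
  have hlin : HasDerivAt (fun y : ℝ => 2*y+4) 2 x := by
    simpa using ((hasDerivAt_id x).const_mul 2).add_const 4
  have hmul := hlin.mul hin
  have hsq : HasDerivAt (fun y : ℝ => 3*(y-1)^2) (6*(x-1)) x := by
    have := (((hasDerivAt_id x).sub_const 1).pow 2).const_mul 3
    refine this.congr_deriv ?_
    simp [id]
    ring
  have := hmul.sub hsq
  refine this.congr_deriv ?_
  ring

lemma pinskerF_one : pinskerF 1 = 0 := by simp [pinskerF]

lemma pinskerG_one : pinskerG 1 = 0 := by norm_num [pinskerG]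

lemma continuousOn_pinskerF {s : Set ℝ} (hs : ∀ y ∈ s, 0 < y) : ContinuousOn pinskerF s :=
  fun y hy => ((hasDerivAt_pinskerF (hs y hy)).continuousAt).continuousWithinAt

lemma continuousOn_pinskerG {s : Set ℝ} (hs : ∀ y ∈ s, 0 < y) : ContinuousOn pinskerG s :=
  fun y hy => ((hasDerivAt_pinskerG (hs y hy)).continuousAt).continuousWithinAt

lemma pinskerF_nonneg {x : ℝ} (hx : 1 ≤ x) : 0 ≤ pinskerF x := by
  have hmono : MonotoneOn pinskerF (Set.Icc 1 x) := by
    apply monotoneOn_of_deriv_nonneg (convex_Icc 1 x)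
    · exact continuousOn_pinskerF (fun y hy => lt_of_lt_of_le one_pos hy.1)
    · intro y hy
      rw [interior_Icc] at hy
      exact (hasDerivAt_pinskerF (lt_trans one_pos hy.1)).differentiableAt.differentiableWithinAt
    · intro y hy
      rw [interior_Icc] at hy
      have hy0 : 0 < y := lt_trans one_pos hy.1
      rw [(hasDerivAt_pinskerF hy0).deriv]
      positivity
  have := hmono (Set.left_mem_Icc.2 hx) (Set.right_mem_Icc.2 hx) hx
  rwa [pinskerF_one] at this

lemma pinskerF_nonpos {x : ℝ} (hx0 : 0 < x) (hx : x ≤ 1) : pinskerF x ≤ 0 := by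
  have hmono : MonotoneOn pinskerF (Set.Icc x 1) := by
    apply monotoneOn_of_deriv_nonneg (convex_Icc x 1)
    · exact continuousOn_pinskerF (fun y hy => lt_of_lt_of_le hx0 hy.1)
    · intro y hy
      rw [interior_Icc] at hy
      exact (hasDerivAt_pinskerF (lt_trans hx0 hy.1)).differentiableAt.differentiableWithinAt
    · intro y hy
      rw [interior_Icc] at hy
      have hy0 : 0 < y := lt_trans hx0 hy.1
      rw [(hasDerivAt_pinskerF hy0).deriv]
      positivity
  have := hmono (Set.left_mem_Icc.2 hx) (Set.right_mem_Icc.2 hx) hx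
  rwa [pinskerF_one] at this

lemma pinskerG_deriv_eq {y : ℝ} (hy : 0 < y) :
    4*(y+1)*Real.log y - 8*(y-1) = 4*(y+1) * pinskerF y := by
  have h2 : y + 1 ≠ 0 := by positivity
  unfold pinskerF
  field_simp
  ring

lemma pinskerG_nonneg {x : ℝ} (hx : 0 < x) : 0 ≤ pinskerG x := by
  rcases le_total 1 x with h | h
  · have hmono : MonotoneOn pinskerG (Set.Icc 1 x) := by
      apply monotoneOn_of_deriv_nonneg (convex_Icc 1 x)
      · exact continuousOn_pinskerG (fun y hy => lt_of_lt_of_le one_pos hy.1)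
      · intro y hy
        rw [interior_Icc] at hy
        exact (hasDerivAt_pinskerG (lt_trans one_pos hy.1)).differentiableAt.differentiableWithinAt
      · intro y hy
        rw [interior_Icc] at hy
        have hy0 : 0 < y := lt_trans one_pos hy.1
        rw [(hasDerivAt_pinskerG hy0).deriv, pinskerG_deriv_eq hy0]
        have := pinskerF_nonneg hy.1.le
        positivity
    have := hmono (Set.left_mem_Icc.2 h) (Set.right_mem_Icc.2 h) h
    rwa [pinskerG_one] at this
  · have hmono : AntitoneOn pinskerG (Set.Icc x 1) := by
      apply antitoneOn_of_deriv_nonpos (convex_Icc x 1)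
      · exact continuousOn_pinskerG (fun y hy => lt_of_lt_of_le hx hy.1)
      · intro y hy
        rw [interior_Icc] at hy
        exact (hasDerivAt_pinskerG (lt_trans hx hy.1)).differentiableAt.differentiableWithinAt
      · intro y hy
        rw [interior_Icc] at hy
        have hy0 : 0 < y := lt_trans hx hy.1
        rw [(hasDerivAt_pinskerG hy0).deriv, pinskerG_deriv_eq hy0]
        have hF := pinskerF_nonpos hy0 hy.2.le
        have h1 : (0:ℝ) < 4*(y+1) := by positivity
        exact mul_nonpos_of_nonneg_of_nonpos h1.le hF
    have := hmono (Set.left_mem_Icc.2 h) (Set.right_mem_Icc.2 h) h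
    rwa [pinskerG_one] at this

lemma pinsker_key_ineq {x : ℝ} (hx : 0 ≤ x) :
    3*(x-1)^2 ≤ (2*x+4)*(x*Real.log x - x + 1) := by
  rcases eq_or_lt_of_le hx with h | h
  · rw [← h]; norm_num
  · have := pinskerG_nonneg h
    unfold pinskerG at this
    linarith

lemma pinsker_phi_nonneg {x : ℝ} (hx : 0 ≤ x) : 0 ≤ x*Real.log x - x + 1 := by
  have h := pinsker_key_ineq hx
  nlinarith [sq_nonneg (x-1)]

lemma pinsker_sqrt_amgm {u v : ℝ} (hu : 0 ≤ u) (hv : 0 ≤ v) :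
    Real.sqrt u * Real.sqrt v ≤ (u + v) / 2 := by
  nlinarith [sq_nonneg (Real.sqrt u - Real.sqrt v), Real.sq_sqrt hu, Real.sq_sqrt hv,
    Real.sqrt_nonneg u, Real.sqrt_nonneg v]

end PinskerAux

/-- Pinsker's inequality: for probability measures `P ≪ Q`,
`‖P − Q‖_TV ≤ √(KL(P‖Q)/2)`. -/
theorem pinsker_inequality {Z : Type*} [MeasurableSpace Z] (P Q : Measure Z)
    [IsProbabilityMeasure P] [IsProbabilityMeasure Q] (hPQ : P ≪ Q)
    (hInt : Integrable (fun x => Real.log (P.rnDeriv Q x).toReal) P) :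
    tvDist P Q ≤ Real.sqrt (klDiv' P Q / 2) := by
  classical
  set f : Z → ℝ := fun x => (P.rnDeriv Q x).toReal with hf_def
  have hf_meas : Measurable f := (Measure.measurable_rnDeriv P Q).ennreal_toReal
  have hf_nonneg : ∀ x, 0 ≤ f x := fun x => ENNReal.toReal_nonneg
  have hf_int : Integrable f Q := Measure.integrable_toReal_rnDeriv
  have hf_int1 : ∫ x, f x ∂Q = 1 := by
    rw [hf_def, Measure.integral_toReal_rnDeriv hPQ]; simp
  have hfl_int : Integrable (fun x => f x * Real.log (f x)) Q := by
    have := (integrable_rnDeriv_smul_iff (f := fun x => Real.log (f x)) hPQ).2 hInt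
    simpa [smul_eq_mul] using this
  have hKL : ∫ x, f x * Real.log (f x) ∂Q = klDiv' P Q := by
    rw [klDiv']
    rw [← integral_rnDeriv_smul hPQ (f := fun x => Real.log (f x))]
    simp [smul_eq_mul]
    rfl
  -- b = φ ∘ f
  set b : Z → ℝ := fun x => f x * Real.log (f x) - f x + 1 with hb_def
  have hsub_int : Integrable (fun x => f x * Real.log (f x) - f x) Q := hfl_int.sub hf_int
  have hb_int : Integrable b Q := hsub_int.add (integrable_const 1)
  have hb_nonneg : ∀ x, 0 ≤ b x := fun x => pinsker_phi_nonneg (hf_nonneg x)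
  have hb_meas : Measurable b :=
    ((hf_meas.mul (Real.measurable_log.comp hf_meas)).sub hf_meas).add_const 1
  have hb_val : ∫ x, b x ∂Q = klDiv' P Q := by
    rw [hb_def, integral_add hsub_int (integrable_const 1),
        integral_sub hfl_int hf_int, hf_int1, hKL]
    simp
  have hKL_nonneg : 0 ≤ klDiv' P Q := hb_val ▸ integral_nonneg hb_nonneg
  -- a
  set a : Z → ℝ := fun x => (2 * f x + 4) / 3 with ha_def
  have hmul_int : Integrable (fun x => 2 * f x) Q := hf_int.const_mul 2
  have hadd_int : Integrable (fun x => 2 * f x + 4) Q := hmul_int.add (integrable_const 4)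
  have ha_int : Integrable a Q := hadd_int.div_const 3
  have ha_nonneg : ∀ x, 0 ≤ a x := fun x => by
    have := hf_nonneg x; simp only [ha_def]; positivity
  have ha_meas : Measurable a := ((hf_meas.const_mul 2).add_const 4).div_const 3
  have ha_val : ∫ x, a x ∂Q = 2 := by
    rw [ha_def, integral_div, integral_add hmul_int (integrable_const 4),
        integral_const_mul, hf_int1]
    simp
    norm_num
  -- T
  set T := ∫ x, |f x - 1| ∂Q with hT_def
  have hg_int : Integrable (fun x => f x - 1) Q := hf_int.sub (integrable_const 1)
  have hg_int0 : ∫ x, (f x - 1) ∂Q = 0 := by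
    rw [integral_sub hf_int (integrable_const 1), hf_int1]
    simp
  have hT_int : Integrable (fun x => |f x - 1|) Q := hg_int.abs
  -- pointwise bound
  have hpt : ∀ x, |f x - 1| ≤ Real.sqrt (a x) * Real.sqrt (b x) := by
    intro x
    rw [← Real.sqrt_mul (ha_nonneg x), ← Real.sqrt_sq_eq_abs]
    apply Real.sqrt_le_sqrt
    have hkey := pinsker_key_ineq (hf_nonneg x)
    simp only [ha_def, hb_def]
    nlinarith
  -- integrability of the product via AM-GM
  have hprod_int : Integrable (fun x => Real.sqrt (a x) * Real.sqrt (b x)) Q := by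
    refine Integrable.mono'
      (((ha_int.add hb_int).div_const 2 : Integrable (fun x => (a x + b x) / 2) Q))
      ((ha_meas.sqrt.mul hb_meas.sqrt).aestronglyMeasurable) (ae_of_all _ fun x => ?_)
    have h3 := Real.sqrt_nonneg (a x)
    have h4 := Real.sqrt_nonneg (b x)
    rw [Real.norm_eq_abs, abs_of_nonneg (mul_nonneg h3 h4)]
    exact pinsker_sqrt_amgm (ha_nonneg x) (hb_nonneg x)
  -- memℒp
  have h2e : (ENNReal.ofReal (2 : ℝ)) = 2 := by norm_num
  have hmem_a : MemLp (fun x => Real.sqrt (a x)) (ENNReal.ofReal (2 : ℝ)) Q := by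
    rw [h2e, memLp_two_iff_integrable_sq ha_meas.sqrt.aestronglyMeasurable]
    exact ha_int.congr (ae_of_all _ fun x => (Real.sq_sqrt (ha_nonneg x)).symm)
  have hmem_b : MemLp (fun x => Real.sqrt (b x)) (ENNReal.ofReal (2 : ℝ)) Q := by
    rw [h2e, memLp_two_iff_integrable_sq hb_meas.sqrt.aestronglyMeasurable]
    exact hb_int.congr (ae_of_all _ fun x => (Real.sq_sqrt (hb_nonneg x)).symm)
  have hconj : Real.HolderConjugate 2 2 := Real.HolderConjugate.two_two
  have hcs := integral_mul_le_Lp_mul_Lq_of_nonneg hconj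
    (ae_of_all _ fun x => Real.sqrt_nonneg (a x))
    (ae_of_all _ fun x => Real.sqrt_nonneg (b x)) hmem_a hmem_b
  have hpow : ∀ (y : ℝ), 0 ≤ y → Real.sqrt y ^ (2 : ℝ) = y := by
    intro y hy
    rw [show Real.sqrt y ^ (2:ℝ) = Real.sqrt y ^ (2:ℕ) from by
      rw [← Real.rpow_natCast]; norm_num]
    exact Real.sq_sqrt hy
  have hra : ∫ x, Real.sqrt (a x) ^ (2 : ℝ) ∂Q = 2 := by
    rw [show (fun x => Real.sqrt (a x) ^ (2 : ℝ)) = a from funext fun x => hpow _ (ha_nonneg x)]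
    exact ha_val
  have hrb : ∫ x, Real.sqrt (b x) ^ (2 : ℝ) ∂Q = klDiv' P Q := by
    rw [show (fun x => Real.sqrt (b x) ^ (2 : ℝ)) = b from funext fun x => hpow _ (hb_nonneg x)]
    exact hb_val
  rw [hra, hrb, ← Real.sqrt_eq_rpow, ← Real.sqrt_eq_rpow] at hcs
  have hT_le : T ≤ Real.sqrt 2 * Real.sqrt (klDiv' P Q) :=
    le_trans (integral_mono hT_int hprod_int hpt) hcs
  -- rewrite √2·√KL as 2·√(KL/2)
  have hsqrt : Real.sqrt 2 * Real.sqrt (klDiv' P Q) = 2 * Real.sqrt (klDiv' P Q / 2) := by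
    rw [← Real.sqrt_mul (by norm_num : (0:ℝ) ≤ 2) (klDiv' P Q),
        show (2:ℝ) * klDiv' P Q = 4 * (klDiv' P Q / 2) from by ring,
        Real.sqrt_mul (by norm_num : (0:ℝ) ≤ 4),
        show (4:ℝ) = 2 ^ 2 from by norm_num, Real.sqrt_sq (by norm_num : (0:ℝ) ≤ 2)]
  -- tvDist bound
  have htv : tvDist P Q ≤ T / 2 := by
    have hne : Nonempty {s : Set Z // MeasurableSet s} := ⟨⟨∅, MeasurableSet.empty⟩⟩
    refine ciSup_le ?_
    rintro ⟨A, hA⟩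
    have hPA : ∀ (s : Set Z), (P s).toReal = ∫ x in s, f x ∂Q :=
      fun s => (Measure.setIntegral_toReal_rnDeriv hPQ s).symm
    have hQA : ∀ (s : Set Z), (Q s).toReal = ∫ x in s, (1:ℝ) ∂Q := by
      intro s; rw [setIntegral_const]; simp; rfl
    have hdiff : ∀ (s : Set Z), (P s).toReal - (Q s).toReal = ∫ x in s, (f x - 1) ∂Q := by
      intro s
      rw [hPA s, hQA s, ← integral_sub hf_int.integrableOn (integrable_const 1).integrableOn]
    have hzero : (∫ x in A, (f x - 1) ∂Q) + (∫ x in Aᶜ, (f x - 1) ∂Q) = 0 := by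
      rw [integral_add_compl hA hg_int, hg_int0]
    have hTsplit : (∫ x in A, |f x - 1| ∂Q) + (∫ x in Aᶜ, |f x - 1| ∂Q) = T := by
      rw [hT_def, integral_add_compl hA hT_int]
    have habs1 : |∫ x in A, (f x - 1) ∂Q| ≤ ∫ x in A, |f x - 1| ∂Q := by
      simpa [Real.norm_eq_abs] using
        norm_integral_le_integral_norm (μ := Q.restrict A) (fun x => f x - 1)
    have habs2 : |∫ x in Aᶜ, (f x - 1) ∂Q| ≤ ∫ x in Aᶜ, |f x - 1| ∂Q := by
      simpa [Real.norm_eq_abs] using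
        norm_integral_le_integral_norm (μ := Q.restrict Aᶜ) (fun x => f x - 1)
    have heq : |∫ x in A, (f x - 1) ∂Q| = |∫ x in Aᶜ, (f x - 1) ∂Q| := by
      have : ∫ x in Aᶜ, (f x - 1) ∂Q = -(∫ x in A, (f x - 1) ∂Q) := by linarith
      rw [this, abs_neg]
    rw [hdiff A]
    linarith
  calc tvDist P Q ≤ T / 2 := htv
    _ ≤ (2 * Real.sqrt (klDiv' P Q / 2)) / 2 := by
        rw [← hsqrt]; linarith
    _ = Real.sqrt (klDiv' P Q / 2) := by ring
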